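/- The Euler–Mascheroni constant satisfies γ = log(4π) − 2 + 2^3 · Σ_{n=1}^∞ n·(−1)^n·c_n/(2^{2n}·n!), i.e. γ = log(4π) − 2 + 8·Σ_{n=1}^∞ n·(−1)^n·c_n/(4^n·n!). -/

import Mathlib

/-- The Riemann xi function: `ξ(s) = (1/2)·s·(s−1)·π^{−s/2}·Γ(s/2)·ζ(s)`. -/
noncomputable def riemannXi (s : ℂ) : ℂ := (1 / 2) * s * (s - 1) * completedRiemannZeta s

/-- The `n`-th coefficient of the Jensen expansion:
`c n = (n!/(2n)!) · (d^{2n}/dx^{2n})[2·ξ(1/2 + i·x)]` at `x = 0`. -/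
noncomputable def c (n : ℕ) : ℂ :=
  ((n.factorial : ℂ) / (2 * n).factorial) *
    iteratedDeriv (2 * n) (fun x : ℝ => 2 * riemannXi (1 / 2 + Complex.I * x)) 0

namespace JensenAux

open Complex

/-- The entire function agreeing with `2·ξ(1/2 + i·z)` for real `z`. -/
noncomputable def F (z : ℂ) : ℂ :=
  (1 / 2 + I * z) * ((1 / 2 + I * z) - 1) * completedRiemannZeta₀ (1 / 2 + I * z) + 1

lemma diffL : Differentiable ℂ (fun z : ℂ => 1 / 2 + I * z) :=
  (differentiable_id.const_mul I).const_add (1 / 2)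

lemma diffF : Differentiable ℂ F :=
  (((diffL.mul (diffL.sub_const 1)).mul
    (differentiable_completedZeta₀.comp diffL)).add_const 1)

lemma diffIter (n : ℕ) : Differentiable ℂ (iteratedDeriv n F) :=
  diffF.contDiff.differentiable_iteratedDeriv n
    (by exact_mod_cast WithTop.coe_lt_top (n : ℕ∞))

lemma F_eq (x : ℝ) : 2 * riemannXi (1 / 2 + I * x) = F x := by
  rw [riemannXi]
  set s : ℂ := 1 / 2 + I * x with hs
  have hre : s.re = 1 / 2 := by simp [hs]
  have hs0 : s ≠ 0 := fun h => by simp [h] at hre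
  have hs1 : s ≠ 1 := fun h => by simp [h] at hre
  have hs1' : (1 : ℂ) - s ≠ 0 := sub_ne_zero.mpr (Ne.symm hs1)
  rw [F, completedRiemannZeta_eq, ← hs]
  field_simp
  ring

lemma iterD (n : ℕ) : ∀ x : ℝ, iteratedDeriv n (fun t : ℝ => F t) x = iteratedDeriv n F x := by
  induction n with
  | zero => intro x; simp
  | succ n ih =>
    intro x
    rw [iteratedDeriv_succ, iteratedDeriv_succ]
    have hfun : iteratedDeriv n (fun t : ℝ => F t) = fun t : ℝ => iteratedDeriv n F t :=
      funext ih
    rw [hfun]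
    exact (((diffIter n x).hasDerivAt).comp_ofReal).deriv

lemma F_even (z : ℂ) : F (-z) = F z := by
  have h : (1 / 2 : ℂ) + I * (-z) = 1 - (1 / 2 + I * z) := by ring
  rw [F, F, h, completedRiemannZeta₀_one_sub]
  ring

/-- Taylor coefficients data: iterated derivatives of `F` at `0`. -/
noncomputable def D (k : ℕ) : ℂ := iteratedDeriv k F 0

lemma D_odd {k : ℕ} (hk : Odd k) : D k = 0 := by
  have h : (fun z => F (-z)) = F := funext F_even
  have h2 := iteratedDeriv_comp_neg k F 0
  rw [h, neg_zero, hk.neg_one_pow, neg_smul, one_smul] at h2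
  have h3 : (2 : ℂ) * D k = 0 := by unfold D; linear_combination h2
  simpa using h3

lemma c_eq (n : ℕ) : c n = ((n.factorial : ℂ) / (2 * n).factorial) * D (2 * n) := by
  rw [c]
  congr 1
  rw [show (fun x : ℝ => 2 * riemannXi (1 / 2 + Complex.I * x)) = fun x : ℝ => F x from
    funext fun x => F_eq x]
  exact iterD (2 * n) 0

/-- The power series `∑ k·D_k·w^k/k!` at `w = I/2`. -/
noncomputable def q (k : ℕ) : ℂ := (k : ℂ) * D k * (I / 2) ^ k / k.factorial

lemma hpt : (1 / 2 : ℂ) + I * (I / 2) = 0 := by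
  rw [show Complex.I * (Complex.I / 2) = Complex.I * Complex.I / 2 by ring, Complex.I_mul_I]
  norm_num

lemma derivF : deriv F (I / 2) = -I * completedRiemannZeta₀ 0 := by
  have hl : HasDerivAt (fun z : ℂ => 1 / 2 + I * z) I (I / 2) := by
    simpa using ((hasDerivAt_id (I / 2)).const_mul I).const_add (1 / 2 : ℂ)
  have hZ : HasDerivAt completedRiemannZeta₀ (deriv completedRiemannZeta₀ 0)
      ((1 / 2 : ℂ) + I * (I / 2)) := by
    rw [hpt]; exact (differentiable_completedZeta₀ 0).hasDerivAt
  have hcomp := hZ.comp (h := fun z : ℂ => 1 / 2 + I * z) (I / 2) hl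
  have hF : HasDerivAt F
      ((I * ((1 / 2 + I * (I / 2)) - 1) + (1 / 2 + I * (I / 2)) * I) *
        completedRiemannZeta₀ (1 / 2 + I * (I / 2)) +
        (1 / 2 + I * (I / 2)) * ((1 / 2 + I * (I / 2)) - 1) *
          (deriv completedRiemannZeta₀ 0 * I)) (I / 2) :=
    ((hl.mul (hl.sub_const 1)).mul hcomp).add_const 1
  rw [hpt] at hF
  rw [hF.deriv]
  ring

lemma hasSum_q_succ : HasSum (fun n : ℕ => q (n + 1)) (I / 2 * deriv F (I / 2)) := by
  have hd : Differentiable ℂ (deriv F) := by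
    have h := diffIter 1; rwa [iteratedDeriv_one] at h
  have hT := (Complex.hasSum_taylorSeries_of_entire hd 0 (I / 2)).mul_left (I / 2)
  convert hT using 2 with n
  · rfl
  rw [smul_eq_mul, smul_eq_mul, sub_zero, ← iteratedDeriv_succ']
  unfold q D
  have hne : ((n.factorial : ℂ)) ≠ 0 := Nat.cast_ne_zero.mpr n.factorial_ne_zero
  have hne2 : ((n : ℂ) + 1) ≠ 0 := Nat.cast_add_one_ne_zero n
  rw [Nat.factorial_succ]
  push_cast
  field_simp
  ring

lemma hasSum_q : HasSum q (I / 2 * deriv F (I / 2)) := by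
  have h0 : q 0 = 0 := by simp [q]
  have h := (hasSum_nat_add_iff (f := q) 1).mp hasSum_q_succ
  simpa [h0] using h

lemma hasSum_q_even : HasSum (fun n : ℕ => q (2 * n)) (I / 2 * deriv F (I / 2)) := by
  have hinj : Function.Injective (fun n : ℕ => 2 * n) := fun a b h => by simp only [] at h; omega
  have hzero : ∀ x ∉ Set.range (fun n : ℕ => 2 * n), q x = 0 := by
    intro x hx
    have hodd : Odd x := by
      rcases Nat.even_or_odd x with he | ho
      · obtain ⟨r, hr⟩ := he
        exact absurd ⟨r, show 2 * r = x by omega⟩ hx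
      · exact ho
    simp [q, D_odd hodd]
  exact (hinj.hasSum_iff hzero).mpr hasSum_q

lemma hasSum_main :
    HasSum (fun n : ℕ => (n : ℂ) * (-1) ^ n * c n / (4 ^ n * n.factorial))
      (I / 2 * deriv F (I / 2) / 2) := by
  have h5 := hasSum_q_even.div_const 2
  have hfe : (fun n : ℕ => (n : ℂ) * (-1) ^ n * c n / (4 ^ n * n.factorial)) =
      fun n : ℕ => q (2 * n) / 2 := by
    funext n
    rw [c_eq, q]
    have hI : ((I : ℂ) / 2) ^ (2 * n) = (-1) ^ n / 4 ^ n := by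
      rw [pow_mul, show ((I : ℂ) / 2) ^ 2 = -1 / 4 by rw [div_pow, I_sq]; norm_num, div_pow]
    rw [hI]
    have hne : ((n.factorial : ℂ)) ≠ 0 := Nat.cast_ne_zero.mpr n.factorial_ne_zero
    have hne2 : (((2 * n).factorial : ℂ)) ≠ 0 := Nat.cast_ne_zero.mpr (2 * n).factorial_ne_zero
    have hne4 : ((4 : ℂ) ^ n) ≠ 0 := pow_ne_zero n (by norm_num)
    push_cast
    field_simp
  rw [hfe]
  exact h5

end JensenAux

theorem eulerMascheroni_eq_log_four_pi_sub_two_add_jensen_sum :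
    (Real.eulerMascheroniConstant : ℂ) =
      (Real.log (4 * Real.pi) : ℂ) - 2 +
        8 * ∑' n : ℕ, (n : ℂ) * (-1) ^ n * c n / (4 ^ n * n.factorial) := by
  open Complex JensenAux in
  rw [JensenAux.hasSum_main.tsum_eq, JensenAux.derivF]
  have hΛ : completedRiemannZeta₀ 0 =
      ((Real.eulerMascheroniConstant : ℂ) - Complex.log (4 * Real.pi)) / 2 + 1 := by
    have h := completedRiemannZeta₀_one_sub 1
    rw [sub_self] at h
    rw [h, completedRiemannZeta₀_one]
  have hlog : (Real.log (4 * Real.pi) : ℂ) = Complex.log (4 * Real.pi) := by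
    rw [Complex.ofReal_log (by positivity : (0 : ℝ) ≤ 4 * Real.pi)]
    push_cast
    ring_nf
  rw [hΛ, ← hlog]
  linear_combination (2 * (((Real.eulerMascheroniConstant : ℂ) -
    (Real.log (4 * Real.pi) : ℂ)) / 2 + 1)) * Complex.I_sq
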